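/- If a k-ary Janossy pooling architecture with latent dimension M is dense in the continuous permutation-invariant functions C_sym(Kⁿ), then the indexed k-Janossy architecture with the same latent dimension M is dense in C(Kⁿ). -/
import Mathlib


/-- The unit cube `[0,1]^d` in `ℝ^d`. -/
def unitCube (d : ℕ) : Set (Fin d → ℝ) := {x | ∀ i, x i ∈ Set.Icc (0 : ℝ) 1}

namespace Stmt18Aux

variable {d n : ℕ}

/-- First coordinate of a point in the cube. -/
def c0 (hd : 1 ≤ d) (y : unitCube d) : ℝ := (y : Fin d → ℝ) ⟨0, hd⟩

lemma c0_mem (hd : 1 ≤ d) (y : unitCube d) : c0 hd y ∈ Set.Icc (0:ℝ) 1 := y.2 _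

lemma continuous_c0 (hd : 1 ≤ d) : Continuous (c0 (d := d) hd) :=
  (continuous_apply _).comp continuous_subtype_val

/-- Embedding of the cube onto the `i`-th slab in the first coordinate. -/
noncomputable def Tmap (hd : 1 ≤ d) (i : Fin n) (y : unitCube d) : unitCube d :=
  ⟨fun j => if j = (⟨0, hd⟩ : Fin d) then (c0 hd y + 2 * i) / (2 * n)
    else (y : Fin d → ℝ) j, by
    intro j
    dsimp only
    by_cases h : j = (⟨0, hd⟩ : Fin d)
    · rw [if_pos h]
      have h0 := (c0_mem hd y).1
      have h1 := (c0_mem hd y).2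
      have hi : (i : ℝ) + 1 ≤ n := by exact_mod_cast i.2
      have hn0 : 0 < n := i.pos
      have hn : (0:ℝ) < 2 * n := by positivity
      constructor
      · apply div_nonneg _ hn.le; positivity
      · rw [div_le_one hn]; push_cast; linarith
    · rw [if_neg h]; exact y.2 j⟩

lemma continuous_Tmap (hd : 1 ≤ d) (i : Fin n) : Continuous (Tmap hd i) := by
  apply Continuous.subtype_mk
  apply continuous_pi
  intro j
  by_cases h : j = (⟨0, hd⟩ : Fin d)
  · simp only [if_pos h]
    exact (((continuous_c0 hd).add continuous_const).div_const _)
  · simp only [if_neg h]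
    exact (continuous_apply j).comp continuous_subtype_val

lemma c0_Tmap (hd : 1 ≤ d) (i : Fin n) (y : unitCube d) :
    c0 hd (Tmap hd i y) = (c0 hd y + 2 * i) / (2 * n) := by
  simp [c0, Tmap]

/-- Retraction from the cube back, inverting `Tmap i`. -/
noncomputable def rmap (hd : 1 ≤ d) (i : Fin n) (y : unitCube d) : unitCube d :=
  ⟨fun j => if j = (⟨0, hd⟩ : Fin d) then min 1 (max 0 (2 * n * c0 hd y - 2 * i))
    else (y : Fin d → ℝ) j, by
    intro j
    dsimp only
    by_cases h : j = (⟨0, hd⟩ : Fin d)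
    · rw [if_pos h]
      exact ⟨le_min zero_le_one (le_max_left _ _), min_le_left _ _⟩
    · rw [if_neg h]; exact y.2 j⟩

/-- Bump function which is `1` on the `i`-th slab and `0` on the others. -/
def bfun (hd : 1 ≤ d) (i : Fin n) (y : unitCube d) : ℝ :=
  min 1 (max 0 (1 - max (2 * i - 2 * n * c0 hd y) (2 * n * c0 hd y - 2 * i - 1)))

lemma continuous_bfun (hd : 1 ≤ d) (i : Fin n) : Continuous (bfun hd i) := by
  unfold bfun
  have h : Continuous fun y : unitCube d => 2 * (n:ℝ) * c0 hd y :=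
    (continuous_const.mul (continuous_c0 hd))
  exact continuous_const.min (continuous_const.max
    (continuous_const.sub ((continuous_const.sub h).max
      ((h.sub continuous_const).sub continuous_const))))

lemma two_n_c0_Tmap (hd : 1 ≤ d) (i : Fin n) (y : unitCube d) :
    2 * (n:ℝ) * c0 hd (Tmap hd i y) = c0 hd y + 2 * i := by
  have hn0 : 0 < n := i.pos
  have hn : (2 * (n:ℝ)) ≠ 0 := by positivity
  rw [c0_Tmap, mul_div_assoc']
  field_simp

lemma rmap_Tmap (hd : 1 ≤ d) (i : Fin n) (y : unitCube d) :
    rmap hd i (Tmap hd i y) = y := by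
  apply Subtype.ext
  funext j
  show (if j = (⟨0, hd⟩ : Fin d) then _ else _) = _
  by_cases h : j = (⟨0, hd⟩ : Fin d)
  · rw [if_pos h, two_n_c0_Tmap]
    have h0 := (c0_mem hd y).1
    have h1 := (c0_mem hd y).2
    rw [show c0 hd y + 2 * (i:ℝ) - 2 * i = c0 hd y by ring, max_eq_right h0,
      min_eq_right h1]
    rw [h]; rfl
  · rw [if_neg h]
    show (if j = (⟨0, hd⟩ : Fin d) then _ else _) = _
    rw [if_neg h]

lemma continuous_rmap (hd : 1 ≤ d) (i : Fin n) : Continuous (rmap hd i) := by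
  apply Continuous.subtype_mk
  apply continuous_pi
  intro j
  by_cases h : j = (⟨0, hd⟩ : Fin d)
  · simp only [if_pos h]
    exact continuous_const.min (continuous_const.max
      ((continuous_const.mul (continuous_c0 hd)).sub continuous_const))
  · simp only [if_neg h]
    exact (continuous_apply j).comp continuous_subtype_val

lemma bfun_Tmap_self (hd : 1 ≤ d) (i : Fin n) (y : unitCube d) :
    bfun hd i (Tmap hd i y) = 1 := by
  unfold bfun
  rw [two_n_c0_Tmap]
  have h0 := (c0_mem hd y).1
  have h1 := (c0_mem hd y).2
  have hm : max (2 * (i:ℝ) - (c0 hd y + 2 * i)) (c0 hd y + 2 * i - 2 * i - 1) ≤ 0 :=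
    max_le (by linarith) (by linarith)
  exact min_eq_left (le_max_of_le_right (by linarith))

lemma bfun_Tmap_ne (hd : 1 ≤ d) {i j : Fin n} (h : j ≠ i) (y : unitCube d) :
    bfun hd i (Tmap hd j y) = 0 := by
  unfold bfun
  rw [two_n_c0_Tmap]
  have h0 := (c0_mem hd y).1
  have h1 := (c0_mem hd y).2
  have hm : 1 ≤ max (2 * (i:ℝ) - (c0 hd y + 2 * j)) (c0 hd y + 2 * j - 2 * i - 1) := by
    rcases lt_or_gt_of_ne (fun hv => h (Fin.ext hv)) with hij | hij
    · -- j.val < i.val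
      have : (j:ℝ) + 1 ≤ i := by exact_mod_cast hij
      exact le_max_of_le_left (by linarith)
    · have : (i:ℝ) + 1 ≤ j := by exact_mod_cast hij
      exact le_max_of_le_right (by linarith)
  rw [max_eq_left (by linarith), min_eq_right zero_le_one]

end Stmt18Aux

open Stmt18Aux in
/-- if the (shared-encoder) k-ary Janossy pooling architecture with
latent dimension `M` is dense in the continuous permutation-invariant functions on
`Kⁿ`, then the indexed k-Janossy architecture with latent dimension `M` is dense
in all of `C(Kⁿ)`. -/
theorem stmt_18 (d n k M : ℕ) (hd : 1 ≤ d) (hk : 1 ≤ k) (hkn : k ≤ n)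
    (hdense : ∀ f : (Fin n → unitCube d) → ℝ, Continuous f →
      (∀ (σ : Equiv.Perm (Fin n)) (x : Fin n → unitCube d), f (fun i => x (σ i)) = f x) →
      ∀ ε : ℝ, 0 < ε →
      ∃ (φ : (Fin k → unitCube d) → Fin M → ℝ) (ρ : (Fin M → ℝ) → ℝ),
        Continuous φ ∧ Continuous ρ ∧
        ∀ x, |f x - ρ (∑ I : Fin k → Fin n, φ (fun j => x (I j)))| ≤ ε) :
    ∀ g : (Fin n → unitCube d) → ℝ, Continuous g → ∀ ε : ℝ, 0 < ε →
      ∃ (φ : (Fin k → Fin n) → (Fin k → unitCube d) → Fin M → ℝ) (ρ : (Fin M → ℝ) → ℝ),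
        (∀ I, Continuous (φ I)) ∧ Continuous ρ ∧
        ∀ x, |g x - ρ (∑ I : Fin k → Fin n, φ I (fun j => x (I j)))| ≤ ε := by
  intro g hg ε hε
  -- the symmetrized extension of `g` along the labeled embedding
  set f : (Fin n → unitCube d) → ℝ := fun y =>
    ∑ σ : Equiv.Perm (Fin n),
      (∏ i, bfun hd i (y (σ i))) * g (fun i => rmap hd i (y (σ i))) with hf_def
  have hf_cont : Continuous f := by
    apply continuous_finset_sum
    intro σ _
    apply Continuous.mul
    · apply continuous_finset_prod
      intro i _
      exact (continuous_bfun hd i).comp (continuous_apply (σ i))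
    · apply hg.comp
      apply continuous_pi
      intro i
      exact (continuous_rmap hd i).comp (continuous_apply (σ i))
  have hf_sym : ∀ (σ : Equiv.Perm (Fin n)) (x : Fin n → unitCube d),
      f (fun i => x (σ i)) = f x := by
    intro σ x
    simp only [hf_def]
    exact Fintype.sum_equiv (Equiv.mulLeft σ) _ _ (fun τ => by
      simp [Equiv.Perm.mul_apply])
  have hf_emb : ∀ x : Fin n → unitCube d, f (fun i => Tmap hd i (x i)) = g x := by
    intro x
    simp only [hf_def]
    rw [Finset.sum_eq_single (1 : Equiv.Perm (Fin n))]
    · have hprod : (∏ i, bfun hd i (Tmap hd ((1 : Equiv.Perm (Fin n)) i) (x ((1 : Equiv.Perm (Fin n)) i)))) = 1 := by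
        apply Finset.prod_eq_one
        intro i _
        simp [bfun_Tmap_self hd i (x i)]
      rw [hprod, one_mul]
      congr 1
      funext i
      simp [rmap_Tmap hd i (x i)]
    · intro σ _ hσ
      obtain ⟨i, hi⟩ : ∃ i, σ i ≠ i := by
        by_contra hc
        push_neg at hc
        exact hσ (Equiv.ext hc)
      rw [Finset.prod_eq_zero (Finset.mem_univ i) (bfun_Tmap_ne hd hi (x (σ i))),
        zero_mul]
    · intro h
      exact absurd (Finset.mem_univ _) h
  obtain ⟨φ, ρ, hφ, hρ, hspec⟩ := hdense f hf_cont hf_sym ε hε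
  refine ⟨fun I z => φ (fun j => Tmap hd (I j) (z j)), ρ, ?_, hρ, ?_⟩
  · intro I
    apply hφ.comp
    apply continuous_pi
    intro j
    exact (continuous_Tmap hd (I j)).comp (continuous_apply j)
  · intro x
    have h := hspec (fun i => Tmap hd i (x i))
    rw [hf_emb x] at h
    exact h
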